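/- The function F₁ is convex on all of ℝ; equivalently, its derivative F₁' is monotone nondecreasing on ℝ. -/

import Mathlib

open Real Filter

noncomputable def F1 (δ₀ s : ℝ) : ℝ :=
  if s = 0 then 0
  else if |s| < δ₀ then -(1/2) * s^2 * Real.log (s^2)
  else -(1/2) * s^2 * (Real.log (δ₀^2) + 3) + 2*δ₀*|s| - δ₀^2/2

noncomputable def F1' (δ₀ s : ℝ) : ℝ :=
  if s = 0 then 0
  else if |s| < δ₀ then -(Real.log (s^2) + 1) * s
  else -(Real.log (δ₀^2) + 3) * s + 2*δ₀*(Real.sign s)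

noncomputable def F2 (δ₀ s : ℝ) : ℝ :=
  if |s| < δ₀ then 0
  else (1/2) * s^2 * Real.log (s^2/δ₀^2) + 2*δ₀*|s| - (3/2)*s^2 - δ₀^2/2

noncomputable def F2' (δ₀ s : ℝ) : ℝ :=
  if |s| < δ₀ then 0
  else s * Real.log (s^2/δ₀^2) - 2*s + 2*δ₀*(Real.sign s)

open Set
open scoped Topology

noncomputable def myg (s : ℝ) : ℝ := -(Real.log (s^2) + 1) * s
noncomputable def myp (s : ℝ) : ℝ := -(1/2) * s^2 * Real.log (s^2)

lemma logsq_hasDerivAt {x : ℝ} (hx : x ≠ 0) :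
    HasDerivAt (fun s : ℝ => Real.log (s^2)) ((2 * x^(2-1)) / x^2) x :=
  (hasDerivAt_pow 2 x).log (pow_ne_zero 2 hx)

lemma myg_hasDerivAt {x : ℝ} (hx : x ≠ 0) :
    HasDerivAt myg (-(Real.log (x^2) + 3)) x := by
  have := ((((logsq_hasDerivAt hx).add_const 1).neg).mul (hasDerivAt_id x))
  refine this.congr_deriv ?_
  simp only [Pi.neg_apply, id_eq]
  field_simp
  ring

lemma myp_hasDerivAt {x : ℝ} (hx : x ≠ 0) :
    HasDerivAt myp (myg x) x := by
  have := ((hasDerivAt_pow 2 x).const_mul (-(1/2):ℝ)).mul (logsq_hasDerivAt hx)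
  refine this.congr_deriv ?_
  unfold myg
  field_simp
  ring

lemma myg_cont : Continuous myg := by
  have : myg = fun s => -(2*(s * Real.log s)) - s := by
    funext s
    unfold myg
    rw [Real.log_pow]
    push_cast
    ring
  rw [this]
  exact ((continuous_const.mul Real.continuous_mul_log).neg).sub continuous_id

lemma myp_hasDerivAt_zero : HasDerivAt myp 0 0 := by
  rw [hasDerivAt_iff_tendsto_slope]
  have h1 : (fun s : ℝ => -(s * Real.log s)) =ᶠ[𝓝[≠] (0:ℝ)] slope myp 0 := by
    filter_upwards [self_mem_nhdsWithin] with s hs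
    have hs' : s ≠ 0 := hs
    unfold myp
    rw [slope_def_field]
    rw [Real.log_pow]
    push_cast
    field_simp
    ring
  have h2 : Filter.Tendsto (fun s : ℝ => -(s * Real.log s)) (𝓝 0) (𝓝 0) := by
    have := Real.continuous_mul_log.fun_neg.tendsto 0
    simpa using this
  exact (h2.mono_left nhdsWithin_le_nhds).congr' h1

section main
variable {δ₀ : ℝ}

lemma E1 (hδ₀ : 0 < δ₀) {s : ℝ} (hs : |s| ≤ δ₀) : F1' δ₀ s = myg s := by
  unfold F1' myg
  rcases eq_or_ne s 0 with rfl | h0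
  · simp
  rw [if_neg h0]
  rcases lt_or_eq_of_le hs with h | h
  · rw [if_pos h]
  · rw [if_neg (not_lt.mpr h.ge)]
    rcases (abs_eq hδ₀.le).mp h with rfl | rfl
    · rw [Real.sign_of_pos hδ₀]; ring
    · rw [Real.sign_of_neg (neg_lt_zero.mpr hδ₀), neg_sq]; ring

lemma E2 (hδ₀ : 0 < δ₀) {s : ℝ} (hs : δ₀ ≤ s) :
    F1' δ₀ s = -(Real.log (δ₀^2) + 3) * s + 2*δ₀ := by
  have hs0 : 0 < s := lt_of_lt_of_le hδ₀ hs
  unfold F1'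
  rw [if_neg hs0.ne', if_neg (not_lt.mpr (by rwa [abs_of_pos hs0])), Real.sign_of_pos hs0]
  ring

lemma E3 (hδ₀ : 0 < δ₀) {s : ℝ} (hs : s ≤ -δ₀) :
    F1' δ₀ s = -(Real.log (δ₀^2) + 3) * s - 2*δ₀ := by
  have hs0 : s < 0 := lt_of_le_of_lt hs (neg_lt_zero.mpr hδ₀)
  unfold F1'
  rw [if_neg hs0.ne, if_neg (not_lt.mpr (by rw [abs_of_neg hs0]; linarith)),
    Real.sign_of_neg hs0]
  ring

lemma E4 (hδ₀ : 0 < δ₀) {s : ℝ} (hs : |s| ≤ δ₀) : F1 δ₀ s = myp s := by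
  unfold F1 myp
  rcases eq_or_ne s 0 with rfl | h0
  · simp
  rw [if_neg h0]
  rcases lt_or_eq_of_le hs with h | h
  · rw [if_pos h]
  · rw [if_neg (not_lt.mpr h.ge)]
    have hs2 : s^2 = δ₀^2 := by rw [← sq_abs, h]
    rw [hs2, h]
    ring

lemma E5 (hδ₀ : 0 < δ₀) {s : ℝ} (hs : δ₀ ≤ s) :
    F1 δ₀ s = -(1/2) * s^2 * (Real.log (δ₀^2) + 3) + 2*δ₀*s - δ₀^2/2 := by
  have hs0 : 0 < s := lt_of_lt_of_le hδ₀ hs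
  unfold F1
  rw [if_neg hs0.ne', if_neg (not_lt.mpr (by rwa [abs_of_pos hs0])), abs_of_pos hs0]

lemma E6 (hδ₀ : 0 < δ₀) {s : ℝ} (hs : s ≤ -δ₀) :
    F1 δ₀ s = -(1/2) * s^2 * (Real.log (δ₀^2) + 3) - 2*δ₀*s - δ₀^2/2 := by
  have hs0 : s < 0 := lt_of_le_of_lt hs (neg_lt_zero.mpr hδ₀)
  unfold F1
  rw [if_neg hs0.ne, if_neg (not_lt.mpr (by rw [abs_of_neg hs0]; linarith)), abs_of_neg hs0]
  ring

lemma hp_hasDerivAt (x : ℝ) :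
    HasDerivAt (fun s : ℝ => -(Real.log (δ₀^2) + 3) * s + 2*δ₀) (-(Real.log (δ₀^2) + 3)) x := by
  simpa only [id_eq, mul_one] using
    ((hasDerivAt_id x).const_mul (-(Real.log (δ₀^2) + 3))).add_const (2*δ₀)

lemma hm_hasDerivAt (x : ℝ) :
    HasDerivAt (fun s : ℝ => -(Real.log (δ₀^2) + 3) * s - 2*δ₀) (-(Real.log (δ₀^2) + 3)) x := by
  simpa only [id_eq, mul_one] using
    ((hasDerivAt_id x).const_mul (-(Real.log (δ₀^2) + 3))).sub_const (2*δ₀)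

lemma qp_hasDerivAt (x : ℝ) :
    HasDerivAt (fun s : ℝ => -(1/2) * s^2 * (Real.log (δ₀^2) + 3) + 2*δ₀*s - δ₀^2/2)
      (-(Real.log (δ₀^2) + 3) * x + 2*δ₀) x := by
  have hfun : (fun s : ℝ => -(1/2) * s^2 * (Real.log (δ₀^2) + 3) + 2*δ₀*s - δ₀^2/2)
      = fun s : ℝ => (-(1/2) * (Real.log (δ₀^2) + 3)) * s^2 + (2*δ₀)*s - δ₀^2/2 := by
    funext s; ring
  rw [hfun]
  have := (((hasDerivAt_pow 2 x).const_mul (-(1/2) * (Real.log (δ₀^2) + 3))).add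
    ((hasDerivAt_id x).const_mul (2*δ₀))).sub_const (δ₀^2/2)
  refine this.congr_deriv ?_
  simp
  ring

lemma qm_hasDerivAt (x : ℝ) :
    HasDerivAt (fun s : ℝ => -(1/2) * s^2 * (Real.log (δ₀^2) + 3) - 2*δ₀*s - δ₀^2/2)
      (-(Real.log (δ₀^2) + 3) * x - 2*δ₀) x := by
  have hfun : (fun s : ℝ => -(1/2) * s^2 * (Real.log (δ₀^2) + 3) - 2*δ₀*s - δ₀^2/2)
      = fun s : ℝ => (-(1/2) * (Real.log (δ₀^2) + 3)) * s^2 - (2*δ₀)*s - δ₀^2/2 := by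
    funext s; ring
  rw [hfun]
  have := (((hasDerivAt_pow 2 x).const_mul (-(1/2) * (Real.log (δ₀^2) + 3))).sub
    ((hasDerivAt_id x).const_mul (2*δ₀))).sub_const (δ₀^2/2)
  refine this.congr_deriv ?_
  simp
  ring

lemma DF1'_kink_pos (hδ₀ : 0 < δ₀) :
    HasDerivAt (F1' δ₀) (-(Real.log (δ₀^2) + 3)) δ₀ := by
  have hL : HasDerivWithinAt (F1' δ₀) (-(Real.log (δ₀^2) + 3)) (Iic δ₀) δ₀ := by
    refine ((myg_hasDerivAt hδ₀.ne').hasDerivWithinAt).congr_of_eventuallyEq ?_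
      (E1 hδ₀ (by rw [abs_of_pos hδ₀]))
    filter_upwards [self_mem_nhdsWithin,
      eventually_nhdsWithin_of_eventually_nhds (eventually_gt_nhds hδ₀)] with s hs1 hs2
    exact E1 hδ₀ (abs_le.mpr ⟨by linarith, hs1⟩)
  have hR : HasDerivWithinAt (F1' δ₀) (-(Real.log (δ₀^2) + 3)) (Ici δ₀) δ₀ := by
    refine ((hp_hasDerivAt (δ₀ := δ₀) δ₀).hasDerivWithinAt).congr_of_eventuallyEq ?_
      (E2 hδ₀ le_rfl)
    filter_upwards [self_mem_nhdsWithin] with s hs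
    exact E2 hδ₀ hs
  have := hL.union hR
  rwa [Iic_union_Ici, hasDerivWithinAt_univ] at this

lemma DF1'_kink_neg (hδ₀ : 0 < δ₀) :
    HasDerivAt (F1' δ₀) (-(Real.log (δ₀^2) + 3)) (-δ₀) := by
  have hne : (-δ₀ : ℝ) ≠ 0 := neg_ne_zero.mpr hδ₀.ne'
  have hL : HasDerivWithinAt (F1' δ₀) (-(Real.log (δ₀^2) + 3)) (Iic (-δ₀)) (-δ₀) := by
    refine ((hm_hasDerivAt (δ₀ := δ₀) (-δ₀)).hasDerivWithinAt).congr_of_eventuallyEq ?_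
      (E3 hδ₀ le_rfl)
    filter_upwards [self_mem_nhdsWithin] with s hs
    exact E3 hδ₀ hs
  have hR : HasDerivWithinAt (F1' δ₀) (-(Real.log (δ₀^2) + 3)) (Ici (-δ₀)) (-δ₀) := by
    have hg : HasDerivAt myg (-(Real.log (δ₀^2) + 3)) (-δ₀) := by
      have := myg_hasDerivAt hne
      rwa [neg_sq] at this
    refine (hg.hasDerivWithinAt).congr_of_eventuallyEq ?_
      (E1 hδ₀ (by rw [abs_neg, abs_of_pos hδ₀]))
    filter_upwards [self_mem_nhdsWithin,
      eventually_nhdsWithin_of_eventually_nhds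
        (eventually_lt_nhds (neg_lt_zero.mpr hδ₀))] with s hs1 hs2
    exact E1 hδ₀ (by rw [abs_of_neg hs2]; have h1 : -δ₀ ≤ s := hs1; linarith)
  have := hL.union hR
  rwa [Iic_union_Ici, hasDerivWithinAt_univ] at this

lemma DF1' (hδ₀ : 0 < δ₀) {x : ℝ} (hx : x ≠ 0) :
    HasDerivAt (F1' δ₀)
      (if |x| < δ₀ then -(Real.log (x^2) + 3) else -(Real.log (δ₀^2) + 3)) x := by
  rcases lt_trichotomy |x| δ₀ with h | h | h
  · rw [if_pos h]
    apply (myg_hasDerivAt hx).congr_of_eventuallyEq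
    have hmem : Ioo (-δ₀) δ₀ ∈ 𝓝 x := isOpen_Ioo.mem_nhds (by
      rcases abs_lt.mp h with ⟨h1, h2⟩; exact ⟨h1, h2⟩)
    filter_upwards [hmem] with s hs
    exact E1 hδ₀ (abs_le.mpr ⟨hs.1.le, hs.2.le⟩)
  · rw [if_neg (by rw [h]; exact lt_irrefl _)]
    rcases (abs_eq hδ₀.le).mp h with h' | h' <;> rw [h']
    · exact DF1'_kink_pos hδ₀
    · exact DF1'_kink_neg hδ₀
  · rw [if_neg (not_lt.mpr h.le)]
    rcases lt_abs.mp h with h' | h'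
    · apply (hp_hasDerivAt (δ₀ := δ₀) x).congr_of_eventuallyEq
      filter_upwards [isOpen_Ioi.mem_nhds h'] with s hs
      exact E2 hδ₀ (le_of_lt hs)
    · apply (hm_hasDerivAt (δ₀ := δ₀) x).congr_of_eventuallyEq
      filter_upwards [isOpen_Iio.mem_nhds (by linarith : x < -δ₀)] with s hs
      exact E3 hδ₀ (le_of_lt hs)



lemma logsq_neg (hδ₀ : 0 < δ₀) (hδ₀' : δ₀ < Real.exp (-(3/2))) {y : ℝ} (hy : 0 < y)
    (hy' : y ≤ δ₀) : Real.log (y^2) + 3 < 0 := by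
  have hy2 : y^2 < Real.exp (-3) := by
    have h1 : y < Real.exp (-(3/2)) := lt_of_le_of_lt hy' hδ₀'
    have h2 : y * y < Real.exp (-(3/2)) * Real.exp (-(3/2)) :=
      mul_lt_mul'' h1 h1 hy.le hy.le
    rw [← Real.exp_add] at h2
    norm_num at h2
    rw [sq]
    exact h2
  have := Real.log_lt_log (by positivity) hy2
  rw [Real.log_exp] at this
  linarith

lemma contF1' (hδ₀ : 0 < δ₀) : Continuous (F1' δ₀) := by
  rw [continuous_iff_continuousAt]
  intro x
  rcases eq_or_ne x 0 with rfl | hx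
  · apply myg_cont.continuousAt.congr
    filter_upwards [isOpen_Ioo.mem_nhds (⟨neg_lt_zero.mpr hδ₀, hδ₀⟩ : (0:ℝ) ∈ Ioo (-δ₀) δ₀)]
      with s hs
    exact (E1 hδ₀ (abs_le.mpr ⟨hs.1.le, hs.2.le⟩)).symm
  · exact (DF1' hδ₀ hx).differentiableAt.continuousAt

lemma monoF1' (hδ₀ : 0 < δ₀) (hδ₀' : δ₀ < Real.exp (-(3/2))) : Monotone (F1' δ₀) := by
  have hpos : ∀ x : ℝ, x ≠ 0 → 0 < deriv (F1' δ₀) x := by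
    intro x hx
    rw [(DF1' hδ₀ hx).deriv]
    split_ifs with h
    · have := logsq_neg hδ₀ hδ₀' (abs_pos.mpr hx) h.le
      rw [sq_abs] at this
      linarith
    · have := logsq_neg hδ₀ hδ₀' hδ₀ le_rfl
      linarith
  have hIci : StrictMonoOn (F1' δ₀) (Ici 0) := by
    apply strictMonoOn_of_deriv_pos (convex_Ici 0) (contF1' hδ₀).continuousOn
    intro x hx
    rw [interior_Ici] at hx
    exact hpos x (ne_of_gt hx)
  have hIic : StrictMonoOn (F1' δ₀) (Iic 0) := by
    apply strictMonoOn_of_deriv_pos (convex_Iic 0) (contF1' hδ₀).continuousOn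
    intro x hx
    rw [interior_Iic] at hx
    exact hpos x (ne_of_lt hx)
  exact (hIic.Iic_union_Ici hIci).monotone

lemma DF1_kink_pos (hδ₀ : 0 < δ₀) :
    HasDerivAt (F1 δ₀) (F1' δ₀ δ₀) δ₀ := by
  have hval : F1' δ₀ δ₀ = myg δ₀ := E1 hδ₀ (by rw [abs_of_pos hδ₀])
  rw [hval]
  have hL : HasDerivWithinAt (F1 δ₀) (myg δ₀) (Iic δ₀) δ₀ := by
    refine ((myp_hasDerivAt hδ₀.ne').hasDerivWithinAt).congr_of_eventuallyEq ?_
      (E4 hδ₀ (by rw [abs_of_pos hδ₀]))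
    filter_upwards [self_mem_nhdsWithin,
      eventually_nhdsWithin_of_eventually_nhds (eventually_gt_nhds hδ₀)] with s hs1 hs2
    exact E4 hδ₀ (abs_le.mpr ⟨by linarith, hs1⟩)
  have hR : HasDerivWithinAt (F1 δ₀) (myg δ₀) (Ici δ₀) δ₀ := by
    have hq : HasDerivAt (fun s : ℝ => -(1/2) * s^2 * (Real.log (δ₀^2) + 3) + 2*δ₀*s - δ₀^2/2)
        (myg δ₀) δ₀ := by
      have := qp_hasDerivAt (δ₀ := δ₀) δ₀
      convert this using 1
      unfold myg
      ring
    refine (hq.hasDerivWithinAt).congr_of_eventuallyEq ?_ (E5 hδ₀ le_rfl)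
    filter_upwards [self_mem_nhdsWithin] with s hs
    exact E5 hδ₀ hs
  have := hL.union hR
  rwa [Iic_union_Ici, hasDerivWithinAt_univ] at this

lemma DF1_kink_neg (hδ₀ : 0 < δ₀) :
    HasDerivAt (F1 δ₀) (F1' δ₀ (-δ₀)) (-δ₀) := by
  have hne : (-δ₀ : ℝ) ≠ 0 := neg_ne_zero.mpr hδ₀.ne'
  have hval : F1' δ₀ (-δ₀) = myg (-δ₀) := E1 hδ₀ (by rw [abs_neg, abs_of_pos hδ₀])
  rw [hval]
  have hL : HasDerivWithinAt (F1 δ₀) (myg (-δ₀)) (Iic (-δ₀)) (-δ₀) := by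
    have hq : HasDerivAt (fun s : ℝ => -(1/2) * s^2 * (Real.log (δ₀^2) + 3) - 2*δ₀*s - δ₀^2/2)
        (myg (-δ₀)) (-δ₀) := by
      have := qm_hasDerivAt (δ₀ := δ₀) (-δ₀)
      convert this using 1
      unfold myg
      rw [neg_sq]
      ring
    refine (hq.hasDerivWithinAt).congr_of_eventuallyEq ?_ (E6 hδ₀ le_rfl)
    filter_upwards [self_mem_nhdsWithin] with s hs
    exact E6 hδ₀ hs
  have hR : HasDerivWithinAt (F1 δ₀) (myg (-δ₀)) (Ici (-δ₀)) (-δ₀) := by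
    refine ((myp_hasDerivAt hne).hasDerivWithinAt).congr_of_eventuallyEq ?_
      (E4 hδ₀ (by rw [abs_neg, abs_of_pos hδ₀]))
    filter_upwards [self_mem_nhdsWithin,
      eventually_nhdsWithin_of_eventually_nhds
        (eventually_lt_nhds (neg_lt_zero.mpr hδ₀))] with s hs1 hs2
    exact E4 hδ₀ (by rw [abs_of_neg hs2]; have h1 : -δ₀ ≤ s := hs1; linarith)
  have := hL.union hR
  rwa [Iic_union_Ici, hasDerivWithinAt_univ] at this

lemma DF1 (hδ₀ : 0 < δ₀) (x : ℝ) : HasDerivAt (F1 δ₀) (F1' δ₀ x) x := by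
  rcases eq_or_ne x 0 with rfl | hx
  · have hval : F1' δ₀ 0 = 0 := by unfold F1'; simp
    rw [hval]
    apply myp_hasDerivAt_zero.congr_of_eventuallyEq
    filter_upwards [isOpen_Ioo.mem_nhds (⟨neg_lt_zero.mpr hδ₀, hδ₀⟩ : (0:ℝ) ∈ Ioo (-δ₀) δ₀)]
      with s hs
    exact E4 hδ₀ (abs_le.mpr ⟨hs.1.le, hs.2.le⟩)
  rcases lt_trichotomy |x| δ₀ with h | h | h
  · rw [E1 hδ₀ h.le]
    apply (myp_hasDerivAt hx).congr_of_eventuallyEq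
    have hmem : Ioo (-δ₀) δ₀ ∈ 𝓝 x := isOpen_Ioo.mem_nhds (by
      rcases abs_lt.mp h with ⟨h1, h2⟩; exact ⟨h1, h2⟩)
    filter_upwards [hmem] with s hs
    exact E4 hδ₀ (abs_le.mpr ⟨hs.1.le, hs.2.le⟩)
  · rcases (abs_eq hδ₀.le).mp h with h' | h' <;> rw [h']
    · exact DF1_kink_pos hδ₀
    · exact DF1_kink_neg hδ₀
  · rcases lt_abs.mp h with h' | h'
    · rw [E2 hδ₀ h'.le]
      have hq : HasDerivAt (fun s : ℝ => -(1/2) * s^2 * (Real.log (δ₀^2) + 3) + 2*δ₀*s - δ₀^2/2)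
          (-(Real.log (δ₀^2) + 3) * x + 2*δ₀) x := qp_hasDerivAt x
      apply hq.congr_of_eventuallyEq
      filter_upwards [isOpen_Ioi.mem_nhds h'] with s hs
      exact E5 hδ₀ (le_of_lt hs)
    · rw [E3 hδ₀ (by linarith : x ≤ -δ₀)]
      have hq : HasDerivAt (fun s : ℝ => -(1/2) * s^2 * (Real.log (δ₀^2) + 3) - 2*δ₀*s - δ₀^2/2)
          (-(Real.log (δ₀^2) + 3) * x - 2*δ₀) x := qm_hasDerivAt x
      apply hq.congr_of_eventuallyEq
      filter_upwards [isOpen_Iio.mem_nhds (by linarith : x < -δ₀)] with s hs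
      exact E6 hδ₀ (le_of_lt hs)

end main

theorem stmt_5 (δ₀ : ℝ) (hδ₀ : 0 < δ₀) (hδ₀' : δ₀ < Real.exp (-(3/2))) :
    ConvexOn ℝ Set.univ (F1 δ₀) ∧ Monotone (F1' δ₀) := by
  have hmono := monoF1' hδ₀ hδ₀'
  have hdiff : Differentiable ℝ (F1 δ₀) := fun x => (DF1 hδ₀ x).differentiableAt
  have hderiv : deriv (F1 δ₀) = F1' δ₀ := funext fun x => (DF1 hδ₀ x).deriv
  exact ⟨Monotone.convexOn_univ_of_deriv hdiff (hderiv ▸ hmono), hmono⟩
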